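/- arXiv:2304.01815 — 8 statements merged into one kernel-verified Lean document; each statement's English description precedes it below -/
import Mathlib

section
/- Let η : ℝ → ℝ be differentiable and let α : ℝ → ℝ be locally Lipschitz, strictly increasing, with α(0) = 0. If η(0) ≥ 0 and η'(t) ≥ -α(η(t)) for every t ≥ 0, then η(t) ≥ 0 for all t ≥ 0. -/
/-- Scalar comparison lemma underlying the CBF forward-invariance theorem:
if `η` is differentiable, `α` is an extended class-K∞ function (locally
Lipschitz, strictly increasing, `α 0 = 0`), `η 0 ≥ 0` and
`η' t ≥ -α (η t)` for all `t ≥ 0`, then `η t ≥ 0` for all `t ≥ 0`. -/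
theorem cbf_comparison_lemma (η α : ℝ → ℝ)
    (hη : Differentiable ℝ η)
    (hα_lip : LocallyLipschitz α)
    (hα_mono : StrictMono α)
    (hα_zero : α 0 = 0)
    (h_init : 0 ≤ η 0)
    (h_cond : ∀ t ≥ (0 : ℝ), deriv η t ≥ -α (η t)) :
    ∀ t ≥ (0 : ℝ), 0 ≤ η t := by
  intro t₀ ht₀
  by_contra hneg
  push_neg at hneg
  set S : Set ℝ := {t | t ∈ Set.Icc (0 : ℝ) t₀ ∧ 0 ≤ η t} with hS
  have hScl : IsClosed S := by
    apply IsClosed.inter isClosed_Icc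
    exact isClosed_le continuous_const hη.continuous
  have hSne : S.Nonempty := ⟨0, ⟨le_refl _, ht₀⟩, h_init⟩
  have hSbdd : BddAbove S := ⟨t₀, fun x hx => hx.1.2⟩
  set s := sSup S with hs
  have hsS : s ∈ S := hScl.csSup_mem hSne hSbdd
  have hs0 : 0 ≤ s := hsS.1.1
  have hst₀ : s < t₀ := by
    rcases lt_or_eq_of_le hsS.1.2 with h | h
    · exact h
    · exact absurd (h ▸ hsS.2) (not_le.mpr hneg)
  -- on (s, t₀), η < 0, hence deriv η > 0
  have hneg' : ∀ x ∈ Set.Ioo s t₀, η x < 0 := by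
    intro x hx
    by_contra hge
    push_neg at hge
    have : x ∈ S := ⟨⟨le_trans hs0 hx.1.le, hx.2.le⟩, hge⟩
    exact absurd (le_csSup hSbdd this) (not_le.mpr hx.1)
  have hderiv : ∀ x ∈ interior (Set.Icc s t₀), 0 < deriv η x := by
    intro x hx
    rw [interior_Icc] at hx
    have h1 : α (η x) < 0 := hα_zero ▸ hα_mono (hneg' x hx)
    have h2 := h_cond x (le_trans hs0 hx.1.le)
    linarith
  have hmono : StrictMonoOn η (Set.Icc s t₀) :=
    strictMonoOn_of_deriv_pos (convex_Icc s t₀) hη.continuous.continuousOn hderiv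
  have := hmono (Set.left_mem_Icc.mpr hst₀.le) (Set.right_mem_Icc.mpr hst₀.le) hst₀
  linarith [hsS.2]
end

section
/- Consider the control-affine system ẋ(t) = f(x(t)) + g(x(t))u(t) on ℝⁿ, where f : ℝⁿ → ℝⁿ and g : ℝⁿ → ℝⁿˣᵐ are locally Lipschitz, u : ℝ → ℝᵐ, and x : ℝ → ℝⁿ is a differentiable solution. Let h : ℝ × ℝⁿ → ℝ be continuously differentiable, and let α : ℝ → ℝ be locally Lipschitz, strictly increasing, with α(0) = 0. Suppose that for every t ≥ 0 the CBF condition holds along the trajectory: ∂h/∂t(t, x(t)) + ∇ₓh(t, x(t))·(f(x(t)) + g(x(t))u(t)) ≥ -α(h(t, x(t))). If h(0, x(0)) ≥ 0, then h(t, x(t)) ≥ 0 for all t ≥ 0; that is, the time-varying set S(t) = {x : h(t,x) ≥ 0} is forward invariant along the trajectory. -/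
/-- CBF forward invariance along a closed-loop trajectory (Theorem 1).
The control-affine system is `ẋ = f x + g x u`, with `g x` an `n × m`
matrix viewed as a continuous linear map `ℝᵐ →L ℝⁿ`.  If the CBF condition
`∂h/∂t + ∇ₓh ⬝ (f x + g x u) ≥ -α (h (t, x))` holds along the trajectory
for all `t ≥ 0` and `h (0, x 0) ≥ 0`, then `h (t, x t) ≥ 0` for all `t ≥ 0`,
i.e. `S(t) = {x | h (t, x) ≥ 0}` is forward invariant along the trajectory. -/
theorem cbf_forward_invariance (n m : ℕ)
    (f : (Fin n → ℝ) → (Fin n → ℝ))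
    (g : (Fin n → ℝ) → ((Fin m → ℝ) →L[ℝ] (Fin n → ℝ)))
    (hf : LocallyLipschitz f)
    (hg : LocallyLipschitz g)
    (u : ℝ → (Fin m → ℝ))
    (x : ℝ → (Fin n → ℝ))
    (hx : ∀ t : ℝ, HasDerivAt x (f (x t) + g (x t) (u t)) t)
    (h : ℝ × (Fin n → ℝ) → ℝ)
    (hh : ContDiff ℝ 1 h)
    (α : ℝ → ℝ)
    (hα_lip : LocallyLipschitz α)
    (hα_mono : StrictMono α)
    (hα_zero : α 0 = 0)
    (h_cbf : ∀ t ≥ (0 : ℝ),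
      fderiv ℝ h (t, x t) (1, f (x t) + g (x t) (u t)) ≥ -α (h (t, x t)))
    (h_init : 0 ≤ h (0, x 0)) :
    ∀ t ≥ (0 : ℝ), x t ∈ {y : Fin n → ℝ | 0 ≤ h (t, y)} := by
  intro t ht
  simp only [Set.mem_setOf_eq]
  set φ : ℝ → ℝ := fun s => h (s, x s) with hφdef
  have hderiv : ∀ s : ℝ,
      HasDerivAt φ (fderiv ℝ h (s, x s) (1, f (x s) + g (x s) (u s))) s := by
    intro s
    have h1 : HasDerivAt (fun s : ℝ => (s, x s))
        ((1 : ℝ), f (x s) + g (x s) (u s)) s :=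
      (hasDerivAt_id s).prodMk (hx s)
    exact (((hh.differentiable one_ne_zero) (s, x s)).hasFDerivAt).comp_hasDerivAt s h1
  have hcont : Continuous φ :=
    continuous_iff_continuousAt.mpr fun s => (hderiv s).continuousAt
  by_contra hneg
  push_neg at hneg
  -- hneg : φ t < 0
  set A : Set ℝ := {s | s ∈ Set.Icc 0 t ∧ 0 ≤ φ s} with hAdef
  have hA0 : (0 : ℝ) ∈ A := ⟨⟨le_rfl, ht⟩, h_init⟩
  have hAne : A.Nonempty := ⟨0, hA0⟩
  have hAbdd : BddAbove A := ⟨t, fun s hs => hs.1.2⟩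
  have hAclosed : IsClosed A := by
    have : A = Set.Icc 0 t ∩ φ ⁻¹' Set.Ici 0 := by
      ext s; simp [hAdef, Set.mem_preimage]
    rw [this]
    exact isClosed_Icc.inter (isClosed_Ici.preimage hcont)
  set t₀ : ℝ := sSup A with ht₀def
  have ht₀mem : t₀ ∈ A := hAclosed.csSup_mem hAne hAbdd
  have ht₀0 : 0 ≤ t₀ := ht₀mem.1.1
  have ht₀t : t₀ < t := by
    rcases lt_or_eq_of_le ht₀mem.1.2 with h' | h'
    · exact h'
    · exact absurd (h' ▸ ht₀mem.2) (not_le.mpr hneg)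
  have hlt : ∀ s, t₀ < s → s ≤ t → φ s < 0 := by
    intro s hs1 hs2
    by_contra hcon
    push_neg at hcon
    exact absurd (le_csSup hAbdd ⟨⟨ht₀0.trans hs1.le, hs2⟩, hcon⟩) (not_le.mpr hs1)
  have hmono : MonotoneOn φ (Set.Icc t₀ t) := by
    apply monotoneOn_of_deriv_nonneg (convex_Icc t₀ t) hcont.continuousOn
    · intro s hs
      exact (hderiv s).differentiableAt.differentiableWithinAt
    · intro s hs
      rw [interior_Icc] at hs
      rw [(hderiv s).deriv]
      have hs0 : (0 : ℝ) ≤ s := ht₀0.trans hs.1.le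
      have h1 := h_cbf s hs0
      have h2 : φ s < 0 := hlt s hs.1 hs.2.le
      have h3 : α (φ s) < 0 := hα_zero ▸ hα_mono h2
      calc (0 : ℝ) ≤ -α (φ s) := by linarith
        _ ≤ _ := h1
  have := hmono (Set.left_mem_Icc.mpr ht₀t.le) (Set.right_mem_Icc.mpr ht₀t.le) ht₀t.le
  have := ht₀mem.2
  linarith
end

section
/- Let E be a finite-dimensional real inner product space, let Ψ : ℝ × E → ℝ be twice continuously differentiable, and write ∇Ψ(t,y) for the gradient of Ψ with respect to its second argument. Let P : E → E be a continuous linear map with ⟨P v, v⟩ ≥ b‖v‖² for all v ∈ E, where b > 0. Suppose z : ℝ → E is differentiable and for all t ≥ 0 satisfies the predictor–corrector relation ∇²_{yy}Ψ(t, z(t))(z'(t)) + ∂_t∇Ψ(t, z(t)) = -P(∇Ψ(t, z(t))). Then for all t ≥ 0, ‖∇Ψ(t, z(t))‖ ≤ e^{-bt}·‖∇Ψ(0, z(0))‖. -/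
open scoped RealInnerProductSpace

/-- Exponential decay of the gradient along predictor–corrector interior
point dynamics (first part of Lemma 1).  Here `∇Ψ t y` denotes the gradient
of `Ψ` with respect to its second argument, the Hessian is the Fréchet
derivative of the gradient map in `y`, and `∂_t∇Ψ` is the time derivative of
the gradient map.  The predictor–corrector relation
`∇²Ψ(t, z t)(z' t) + ∂_t∇Ψ(t, z t) = -P (∇Ψ(t, z t))` implies
`‖∇Ψ(t, z t)‖ ≤ e^{-b t} ‖∇Ψ(0, z 0)‖` for all `t ≥ 0`. -/
theorem predictor_corrector_gradient_decay
    (E : Type*) [NormedAddCommGroup E] [InnerProductSpace ℝ E]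
    [FiniteDimensional ℝ E]
    (Ψ : ℝ × E → ℝ) (hΨ : ContDiff ℝ 2 Ψ)
    (gradΨ : ℝ → E → E)
    (hgrad : ∀ t y, gradΨ t y = gradient (fun y' => Ψ (t, y')) y)
    (P : E →L[ℝ] E) (b : ℝ) (hb : 0 < b)
    (hP : ∀ v : E, b * ‖v‖ ^ 2 ≤ ⟪P v, v⟫)
    (z : ℝ → E) (hz : Differentiable ℝ z)
    (hdyn : ∀ t ≥ (0 : ℝ),
      fderiv ℝ (fun y => gradΨ t y) (z t) (deriv z t)
        + deriv (fun s => gradΨ s (z t)) t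
      = -P (gradΨ t (z t))) :
    ∀ t ≥ (0 : ℝ),
      ‖gradΨ t (z t)‖ ≤ Real.exp (-b * t) * ‖gradΨ 0 (z 0)‖ := by
  classical
  set G : ℝ × E → E := fun p =>
    (InnerProductSpace.toDual ℝ E).symm
      ((fderiv ℝ Ψ p).comp (ContinuousLinearMap.inr ℝ ℝ E)) with hG_def
  have hΨd : Differentiable ℝ Ψ := hΨ.differentiable (by norm_num)
  -- gradΨ computed via G
  have hGeq : ∀ t y, gradΨ t y = G (t, y) := by
    intro t y
    rw [hgrad, gradient]
    congr 1
    exact ((hΨd (t, y)).hasFDerivAt.comp y (hasFDerivAt_prodMk_right t y)).fderiv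
  -- G is C¹
  have hGc : ContDiff ℝ 1 G := by
    have h1 : ContDiff ℝ 1 (fderiv ℝ Ψ) := hΨ.fderiv_right (by norm_num)
    have h2 : ContDiff ℝ 1 fun p : ℝ × E =>
        ((fderiv ℝ Ψ p).comp (ContinuousLinearMap.inr ℝ ℝ E)) :=
      (((ContinuousLinearMap.compL ℝ E (ℝ × E) ℝ).flip
        (ContinuousLinearMap.inr ℝ ℝ E)).contDiff).comp h1
    exact ((InnerProductSpace.toDual ℝ E).symm.toContinuousLinearEquiv.contDiff).comp h2
  set g : ℝ → E := fun t => G (t, z t) with hg_def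
  have hGfd : ∀ p : ℝ × E, HasFDerivAt G (fderiv ℝ G p) p := fun p =>
    ((hGc.differentiable one_ne_zero) p).hasFDerivAt
  -- derivative of g
  have hgderiv : ∀ t : ℝ, HasDerivAt g (fderiv ℝ G (t, z t) (1, deriv z t)) t := by
    intro t
    exact (hGfd (t, z t)).comp_hasDerivAt t
      ((hasDerivAt_id t).prodMk (hz t).hasDerivAt)
  -- on t ≥ 0, g' t = -P (g t)
  have hkey : ∀ t ≥ (0 : ℝ), fderiv ℝ G (t, z t) (1, deriv z t) = -P (g t) := by
    intro t ht
    have hpy : HasFDerivAt (fun y => G (t, y))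
        ((fderiv ℝ G (t, z t)).comp (ContinuousLinearMap.inr ℝ ℝ E)) (z t) :=
      (hGfd (t, z t)).comp (z t) (hasFDerivAt_prodMk_right t (z t))
    have hpt : HasDerivAt (fun s => G (s, z t)) (fderiv ℝ G (t, z t) (1, 0)) t :=
      by have := (hGfd (t, z t)).comp_hasDerivAt t
                    ((hasDerivAt_id t).prodMk (hasDerivAt_const t (z t))); exact this
    have e1 : fderiv ℝ (fun y => gradΨ t y) (z t) (deriv z t)
        = fderiv ℝ G (t, z t) (0, deriv z t) := by
      have : (fun y => gradΨ t y) = fun y => G (t, y) := funext fun y => hGeq t y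
      rw [this, hpy.fderiv]; rfl
    have e2 : deriv (fun s => gradΨ s (z t)) t = fderiv ℝ G (t, z t) (1, 0) := by
      have : (fun s => gradΨ s (z t)) = fun s => G (s, z t) :=
        funext fun s => hGeq s (z t)
      rw [this, hpt.deriv]
    have hd := hdyn t ht
    rw [e1, e2, hGeq t (z t)] at hd
    have e3 : ((1 : ℝ), deriv z t) = (0, deriv z t) + (1, 0) := by simp
    rw [e3, map_add]
    exact hd
  -- rescaled function
  set h : ℝ → E := fun t => Real.exp (b * t) • g t with hh_def
  have hhderiv : ∀ t : ℝ, HasDerivAt h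
      (Real.exp (b * t) • fderiv ℝ G (t, z t) (1, deriv z t)
        + (Real.exp (b * t) * b) • g t) t := by
    intro t
    have hc : HasDerivAt (fun t => Real.exp (b * t)) (Real.exp (b * t) * b) t := by
      simpa [mul_comm, Function.comp_def] using (Real.hasDerivAt_exp (b * t)).comp t
        ((hasDerivAt_id t).const_mul b)
    exact hc.smul (hgderiv t)
  set φ : ℝ → ℝ := fun t => ⟪h t, h t⟫ with hφ_def
  have hφderiv : ∀ t : ℝ, HasDerivAt φ
      (⟪h t, Real.exp (b * t) • fderiv ℝ G (t, z t) (1, deriv z t)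
        + (Real.exp (b * t) * b) • g t⟫
        + ⟪Real.exp (b * t) • fderiv ℝ G (t, z t) (1, deriv z t)
        + (Real.exp (b * t) * b) • g t, h t⟫) t :=
    fun t => (hhderiv t).inner ℝ (hhderiv t)
  have hφanti : AntitoneOn φ (Set.Ici (0 : ℝ)) := by
    apply antitoneOn_of_deriv_nonpos (convex_Ici 0)
    · exact fun t _ => ((hφderiv t).continuousAt).continuousWithinAt
    · exact fun t _ => ((hφderiv t).differentiableAt).differentiableWithinAt
    · intro t ht
      rw [interior_Ici] at ht
      have ht' : (0 : ℝ) ≤ t := le_of_lt ht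
      rw [(hφderiv t).deriv, hkey t ht']
      have hnn : (0 : ℝ) ≤ Real.exp (b * t) * Real.exp (b * t) := by positivity
      have hPg := hP (g t)
      have : ⟪h t, Real.exp (b * t) • (-P (g t))
            + (Real.exp (b * t) * b) • g t⟫
          = Real.exp (b * t) * Real.exp (b * t) * (b * ⟪g t, g t⟫ - ⟪P (g t), g t⟫) := by
        simp only [hh_def, inner_add_right, real_inner_smul_left, real_inner_smul_right,
          inner_neg_right, inner_neg_left]
        rw [real_inner_comm (g t) (P (g t))]
        ring
      have hle : b * ⟪g t, g t⟫ - ⟪P (g t), g t⟫ ≤ 0 := by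
        rw [real_inner_self_eq_norm_sq]
        linarith
      have h1 : ⟪h t, Real.exp (b * t) • (-P (g t))
            + (Real.exp (b * t) * b) • g t⟫ ≤ 0 := by
        rw [this]
        exact mul_nonpos_of_nonneg_of_nonpos hnn hle
      have h2 : ⟪Real.exp (b * t) • (-P (g t))
            + (Real.exp (b * t) * b) • g t, h t⟫ ≤ 0 := by
        rwa [real_inner_comm]
      linarith
  -- conclude
  intro t ht
  have hmono := hφanti (Set.self_mem_Ici) ht ht
  have hφt : φ t = (Real.exp (b * t) * ‖g t‖) ^ 2 := by
    simp only [hφ_def, hh_def, real_inner_self_eq_norm_sq, norm_smul,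
      Real.norm_eq_abs, abs_of_pos (Real.exp_pos _), mul_pow]
  have hφ0 : φ 0 = ‖g 0‖ ^ 2 := by
    simp [hφ_def, hh_def, real_inner_self_eq_norm_sq]
  rw [hφt, hφ0] at hmono
  have hsq : Real.exp (b * t) * ‖g t‖ ≤ ‖g 0‖ :=
    le_of_pow_le_pow_left₀ (by norm_num) (norm_nonneg _) hmono
  have : ‖g t‖ ≤ Real.exp (-b * t) * ‖g 0‖ := by
    rw [neg_mul, Real.exp_neg, inv_mul_eq_div, le_div_iff₀ (Real.exp_pos _)]
    linarith [hsq]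
  simpa only [hg_def, ← hGeq] using this
end

section
/- Let E be a finite-dimensional real inner product space, Ψ : ℝ × E → ℝ twice continuously differentiable with ⟨∇²_{yy}Ψ(t,y)v, v⟩ ≥ a‖v‖² for all t ≥ 0, y, v ∈ E, where a > 0 (uniform strong convexity in the second argument). Let P : E → E be a continuous linear map with ⟨P v, v⟩ ≥ b‖v‖² for all v, where b > 0. Suppose z : ℝ → E is differentiable and satisfies ∇²_{yy}Ψ(t, z(t))(z'(t)) + ∂_t∇Ψ(t, z(t)) = -P(∇Ψ(t, z(t))) for all t ≥ 0, and suppose ŷ* : ℝ → E satisfies ∇Ψ(t, ŷ*(t)) = 0 for all t ≥ 0. Then for all t ≥ 0, ‖z(t) - ŷ*(t)‖ ≤ C e^{-bt}, where C = (1/a)·‖∇Ψ(0, z(0))‖. -/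
open scoped RealInnerProductSpace

/-- Lemma 1 (exponential tracking): along the predictor–corrector interior
point dynamics, the trajectory `z` tracks the time-varying critical point
`ŷ*` of the uniformly strongly convex potential `Ψ(t, ·)` at exponential
rate: `‖z t - ŷ* t‖ ≤ C e^{-b t}` with `C = (1/a) ‖∇Ψ(0, z 0)‖`. -/
theorem predictor_corrector_tracking
    (E : Type*) [NormedAddCommGroup E] [InnerProductSpace ℝ E]
    [FiniteDimensional ℝ E]
    (Ψ : ℝ × E → ℝ) (hΨ : ContDiff ℝ 2 Ψ)
    (gradΨ : ℝ → E → E)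
    (hgrad : ∀ t y, gradΨ t y = gradient (fun y' => Ψ (t, y')) y)
    (a : ℝ) (ha : 0 < a)
    (hstrong : ∀ t ≥ (0 : ℝ), ∀ y v : E,
      a * ‖v‖ ^ 2 ≤ ⟪fderiv ℝ (fun y' => gradΨ t y') y v, v⟫)
    (P : E →L[ℝ] E) (b : ℝ) (hb : 0 < b)
    (hP : ∀ v : E, b * ‖v‖ ^ 2 ≤ ⟪P v, v⟫)
    (z : ℝ → E) (hz : Differentiable ℝ z)
    (hdyn : ∀ t ≥ (0 : ℝ),
      fderiv ℝ (fun y => gradΨ t y) (z t) (deriv z t)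
        + deriv (fun s => gradΨ s (z t)) t
      = -P (gradΨ t (z t)))
    (ystar : ℝ → E)
    (hcrit : ∀ t ≥ (0 : ℝ), gradΨ t (ystar t) = 0) :
    ∀ t ≥ (0 : ℝ),
      ‖z t - ystar t‖ ≤ (1 / a) * ‖gradΨ 0 (z 0)‖ * Real.exp (-b * t) := by
  -- the joint gradient map
  set G : ℝ × E → E := fun p =>
    (InnerProductSpace.toDual ℝ E).symm ((fderiv ℝ Ψ p).comp (ContinuousLinearMap.inr ℝ ℝ E))
    with hGdef
  have hΨd : Differentiable ℝ Ψ := hΨ.differentiable (by norm_num)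
  have hG : ∀ t (y : E), gradΨ t y = G (t, y) := by
    intro t y
    rw [hgrad, gradient]
    congr 1
    have : HasFDerivAt (fun y' => Ψ (t, y'))
        ((fderiv ℝ Ψ (t, y)).comp (ContinuousLinearMap.inr ℝ ℝ E)) y :=
      (hΨd (t, y)).hasFDerivAt.comp y (hasFDerivAt_prodMk_right t y)
    exact this.fderiv
  have hfC1 : ContDiff ℝ 1 (fderiv ℝ Ψ) := hΨ.fderiv_right (by norm_num)
  have hGC1 : ContDiff ℝ 1 G := by
    apply (InnerProductSpace.toDual ℝ E).symm.toContinuousLinearEquiv.contDiff.comp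
    exact (((ContinuousLinearMap.compL ℝ E (ℝ × E) ℝ).flip
      (ContinuousLinearMap.inr ℝ ℝ E)).contDiff).comp hfC1
  have hGd : Differentiable ℝ G := hGC1.differentiable one_ne_zero
  -- the curve g t = gradΨ t (z t)
  set g : ℝ → E := fun s => G (s, z s) with hgdef
  -- derivatives of G in various directions
  have hcurve : ∀ t : ℝ, HasDerivAt (fun s => (s, z s) : ℝ → ℝ × E) (1, deriv z t) t :=
    fun t => (hasDerivAt_id t).prodMk (hz t).hasDerivAt
  have hgder : ∀ t : ℝ, HasDerivAt g (fderiv ℝ G (t, z t) (1, deriv z t)) t := fun t =>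
    by have := (hGd (t, z t)).hasFDerivAt.comp_hasDerivAt t (hcurve t); exact this
  have hgdiff : Differentiable ℝ g := fun t => (hgder t).differentiableAt
  -- the ODE for g on [0, ∞)
  have hODE : ∀ t ≥ (0 : ℝ), HasDerivAt g (-P (g t)) t := by
    intro t ht
    have h1 : HasFDerivAt (fun y => G (t, y))
        ((fderiv ℝ G (t, z t)).comp (ContinuousLinearMap.inr ℝ ℝ E)) (z t) :=
      (hGd (t, z t)).hasFDerivAt.comp (z t) (hasFDerivAt_prodMk_right t (z t))
    have h2 : HasDerivAt (fun s => G (s, z t)) (fderiv ℝ G (t, z t) (1, 0)) t := by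
      have := (hGd (t, z t)).hasFDerivAt.comp_hasDerivAt t
        ((hasDerivAt_id t).prodMk (hasDerivAt_const t (z t)))
      exact this
    have hdyn' := hdyn t ht
    simp only [hG] at hdyn'
    rw [h1.fderiv, h2.deriv] at hdyn'
    have hsplit : fderiv ℝ G (t, z t) (1, deriv z t)
        = fderiv ℝ G (t, z t) (1, 0) + fderiv ℝ G (t, z t) (0, deriv z t) := by
      rw [← ContinuousLinearMap.map_add]
      norm_num
    have : fderiv ℝ G (t, z t) (1, deriv z t) = -P (g t) := by
      rw [hsplit, add_comm]
      simpa using hdyn'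
    exact this ▸ hgder t
  -- Lyapunov function φ t = e^{2bt} ⟪g t, g t⟫ is nonincreasing on [0, ∞)
  set φ : ℝ → ℝ := fun s => Real.exp (2 * b * s) * ⟪g s, g s⟫ with hφdef
  have hφdiff : Differentiable ℝ φ := by
    apply Differentiable.mul
    · exact (Real.differentiable_exp.comp ((differentiable_id.const_mul _)))
    · exact fun x => ((hgdiff x).inner ℝ (hgdiff x))
  have hφder : ∀ t ≥ (0 : ℝ), HasDerivAt φ
      (2 * b * Real.exp (2 * b * t) * ⟪g t, g t⟫
        + Real.exp (2 * b * t) * (⟪g t, -P (g t)⟫ + ⟪-P (g t), g t⟫)) t := by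
    intro t ht
    have he : HasDerivAt (fun s => Real.exp (2 * b * s)) (2 * b * Real.exp (2 * b * t)) t := by
      have := ((hasDerivAt_id t).const_mul (2 * b)).exp
      simpa [mul_comm] using this
    have hi : HasDerivAt (fun s => ⟪g s, g s⟫) (⟪g t, -P (g t)⟫ + ⟪-P (g t), g t⟫) t :=
      (hODE t ht).inner ℝ (hODE t ht)
    exact he.mul hi
  have hφmono : AntitoneOn φ (Set.Ici (0 : ℝ)) := by
    apply antitoneOn_of_deriv_nonpos (convex_Ici 0) hφdiff.continuous.continuousOn
      (hφdiff.differentiableOn.mono interior_subset)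
    intro t ht
    rw [interior_Ici] at ht
    rw [(hφder t (le_of_lt ht)).deriv]
    have hinner : ⟪g t, g t⟫ = ‖g t‖ ^ 2 := real_inner_self_eq_norm_sq (g t)
    have h1 : ⟪g t, -P (g t)⟫ = -⟪P (g t), g t⟫ := by
      rw [inner_neg_right, real_inner_comm]
    have h2 : ⟪-P (g t), g t⟫ = -⟪P (g t), g t⟫ := by rw [inner_neg_left]
    have hPg := hP (g t)
    have hexp : (0 : ℝ) < Real.exp (2 * b * t) := Real.exp_pos _
    rw [h1, h2, hinner]
    nlinarith [hexp, hPg]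
  -- hence exponential decay of ‖g t‖
  have hgdecay : ∀ t ≥ (0 : ℝ), ‖g t‖ ≤ ‖g 0‖ * Real.exp (-b * t) := by
    intro t ht
    have := hφmono (Set.self_mem_Ici) ht ht
    simp only [hφdef, mul_zero, Real.exp_zero, one_mul] at this
    have hsq : ‖g t‖ ^ 2 ≤ (‖g 0‖ * Real.exp (-b * t)) ^ 2 := by
      rw [real_inner_self_eq_norm_sq, real_inner_self_eq_norm_sq] at this
      have hexp : (0 : ℝ) < Real.exp (2 * b * t) := Real.exp_pos _
      have h2 : Real.exp (-b * t) ^ 2 = (Real.exp (2 * b * t))⁻¹ := by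
        rw [← Real.exp_nat_mul, ← Real.exp_neg]
        ring_nf
      rw [mul_pow, h2, ← div_eq_mul_inv, le_div_iff₀ hexp, mul_comm]
      exact this
    have h0 : (0 : ℝ) ≤ ‖g 0‖ * Real.exp (-b * t) :=
      mul_nonneg (norm_nonneg _) (Real.exp_pos _).le
    nlinarith [norm_nonneg (g t)]
  -- strong convexity: a ‖z t - ystar t‖² ≤ ⟪g t, z t - ystar t⟫
  intro t ht
  set d : E := z t - ystar t with hddef
  by_cases hd : d = 0
  · have : z t - ystar t = 0 := hd
    rw [show ‖z t - ystar t‖ = 0 by rw [this, norm_zero]]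
    positivity
  · -- mean value theorem along the segment
    have hstr : a * ‖d‖ ^ 2 ≤ ⟪g t, d⟫ := by
      set h : ℝ → ℝ := fun s => ⟪G (t, ystar t + s • d), d⟫ with hhdef
      have hhder : ∀ s : ℝ, HasDerivAt h
          ⟪fderiv ℝ (fun y => G (t, y)) (ystar t + s • d) d, d⟫ s := by
        intro s
        have hc : HasDerivAt (fun s : ℝ => ystar t + s • d) d s := by
          have := ((hasDerivAt_id s).smul_const d).const_add (ystar t)
          simpa using this
        have hGy : HasFDerivAt (fun y => G (t, y))
            ((fderiv ℝ G (t, ystar t + s • d)).comp (ContinuousLinearMap.inr ℝ ℝ E))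
            (ystar t + s • d) :=
          (hGd _).hasFDerivAt.comp _ (hasFDerivAt_prodMk_right t _)
        have hcomp : HasDerivAt (fun s : ℝ => G (t, ystar t + s • d))
            ((fderiv ℝ G (t, ystar t + s • d)).comp (ContinuousLinearMap.inr ℝ ℝ E) d) s :=
          by have := hGy.comp_hasDerivAt s hc; exact this
        rw [hGy.fderiv]
        have := hcomp.inner ℝ (hasDerivAt_const s d)
        simpa only [inner_zero_right, zero_add, add_zero] using this
      obtain ⟨c, hc, hceq⟩ := exists_hasDerivAt_eq_slope h _ (by norm_num : (0:ℝ) < 1)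
        (fun s _ => (hhder s).continuousAt.continuousWithinAt)
        (fun s _ => hhder s)
      have hlow : a * ‖d‖ ^ 2 ≤
          ⟪fderiv ℝ (fun y => G (t, y)) (ystar t + c • d) d, d⟫ := by
        have := hstrong t ht (ystar t + c • d) d
        simpa only [hG] using this
      rw [hceq] at hlow
      simp only [hhdef, one_smul, zero_smul, add_zero, sub_zero, div_one] at hlow
      have h1 : ystar t + d = z t := by rw [hddef]; abel
      have h0 : G (t, ystar t) = 0 := by rw [← hG]; exact hcrit t ht
      rw [h1, h0] at hlow
      simpa [hgdef, inner_zero_left] using hlow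
    have hcs : ⟪g t, d⟫ ≤ ‖g t‖ * ‖d‖ := real_inner_le_norm _ _
    have hdpos : (0 : ℝ) < ‖d‖ := norm_pos_iff.mpr hd
    have key : a * ‖d‖ ≤ ‖g t‖ := by
      have := hstr.trans hcs
      nlinarith
    have hg0 : g 0 = gradΨ 0 (z 0) := (hG 0 (z 0)).symm
    calc ‖z t - ystar t‖ = ‖d‖ := rfl
      _ ≤ ‖g t‖ / a := by rw [le_div_iff₀ ha]; linarith [key]
      _ ≤ (‖g 0‖ * Real.exp (-b * t)) / a := by
          gcongr
          exact hgdecay t ht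
      _ = (1 / a) * ‖gradΨ 0 (z 0)‖ * Real.exp (-b * t) := by rw [hg0]; ring
end

section
/- Let c ≥ 1, and let h : Fin c → ℝ and w : Fin c → ℝ with wᵢ > 0 for every i. If 1 - ∑_{i=1}^{c} exp(-wᵢ hᵢ) ≥ 0, then hᵢ ≥ 0 for every i; moreover, if c ≥ 2 then hᵢ > 0 for every i. -/
open scoped BigOperators

/-- The zero superlevel set of the exponential consolidated CBF candidate
`H = 1 - ∑ i, exp (-(wᵢ hᵢ))` with positive weights is contained in the
complete constraint set: `H ≥ 0` forces `hᵢ ≥ 0` for every `i`, and even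
`hᵢ > 0` when there are at least two constraints. -/
theorem ccbf_superlevel_subset (c : ℕ) (hc : 1 ≤ c)
    (h w : Fin c → ℝ) (hw : ∀ i, 0 < w i)
    (hH : 0 ≤ 1 - ∑ i, Real.exp (-(w i * h i))) :
    (∀ i, 0 ≤ h i) ∧ (2 ≤ c → ∀ i, 0 < h i) := by
  have hsum : ∑ i, Real.exp (-(w i * h i)) ≤ 1 := by linarith
  constructor
  · intro i
    have hle : Real.exp (-(w i * h i)) ≤ 1 := by
      calc Real.exp (-(w i * h i))
          ≤ ∑ j, Real.exp (-(w j * h j)) :=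
            Finset.single_le_sum (f := fun j => Real.exp (-(w j * h j))) (fun j _ => (Real.exp_pos _).le) (Finset.mem_univ i)
        _ ≤ 1 := hsum
    have : -(w i * h i) ≤ 0 := Real.exp_le_one_iff.mp hle
    nlinarith [hw i]
  · intro h2 i
    haveI : Nontrivial (Fin c) := Fin.nontrivial_iff_two_le.mpr h2
    obtain ⟨j, hj⟩ := exists_ne i
    have hpair : Real.exp (-(w i * h i)) + Real.exp (-(w j * h j))
        ≤ ∑ k, Real.exp (-(w k * h k)) := by
      have hsub : ({i, j} : Finset (Fin c)) ⊆ Finset.univ := Finset.subset_univ _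
      calc Real.exp (-(w i * h i)) + Real.exp (-(w j * h j))
          = ∑ k ∈ ({i, j} : Finset (Fin c)), Real.exp (-(w k * h k)) :=
            (Finset.sum_pair (f := fun k => Real.exp (-(w k * h k))) (Ne.symm hj)).symm
        _ ≤ ∑ k, Real.exp (-(w k * h k)) :=
            Finset.sum_le_sum_of_subset_of_nonneg hsub
              (fun k _ _ => (Real.exp_pos _).le)
    have hlt : Real.exp (-(w i * h i)) < 1 := by
      have := Real.exp_pos (-(w j * h j))
      linarith
    have : -(w i * h i) < 0 := Real.exp_lt_one_iff.mp hlt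
    nlinarith [hw i]
end

section
/- Let c ≥ 1, let X be any set, let hᵢ : X → ℝ for i ∈ Fin c, and let w, w' : Fin c → ℝ satisfy 0 < wᵢ ≤ w'ᵢ for all i. Then {x ∈ X : 1 - ∑_{i=1}^{c} exp(-wᵢ hᵢ(x)) ≥ 0} ⊆ {x ∈ X : 1 - ∑_{i=1}^{c} exp(-w'ᵢ hᵢ(x)) ≥ 0}; that is, the zero superlevel set of the exponential consolidated barrier candidate is monotone non-decreasing in the weights. -/
open scoped BigOperators

/-- Monotonicity of the zero superlevel set of the exponential consolidated
barrier candidate in the weights: if `0 < wᵢ ≤ w'ᵢ` for every `i`, then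
`{x | 1 - ∑ i, exp (-(wᵢ hᵢ x)) ≥ 0} ⊆ {x | 1 - ∑ i, exp (-(w'ᵢ hᵢ x)) ≥ 0}`. -/
theorem ccbf_superlevel_monotone_in_weights (c : ℕ) (hc : 1 ≤ c)
    (X : Type*) (h : Fin c → X → ℝ)
    (w w' : Fin c → ℝ)
    (hw : ∀ i, 0 < w i) (hww' : ∀ i, w i ≤ w' i) :
    {x : X | 0 ≤ 1 - ∑ i, Real.exp (-(w i * h i x))} ⊆
      {x : X | 0 ≤ 1 - ∑ i, Real.exp (-(w' i * h i x))} := by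
  intro x hx
  simp only [Set.mem_setOf_eq, sub_nonneg] at hx ⊢
  have hsum : ∑ i, Real.exp (-(w i * h i x)) ≤ 1 := hx
  have hterm : ∀ i, Real.exp (-(w i * h i x)) ≤ 1 := by
    intro i
    calc Real.exp (-(w i * h i x))
        ≤ ∑ j, Real.exp (-(w j * h j x)) :=
          Finset.single_le_sum (f := fun j => Real.exp (-(w j * h j x))) (fun j _ => (Real.exp_pos _).le) (Finset.mem_univ i)
      _ ≤ 1 := hsum
  have hh : ∀ i, 0 ≤ h i x := by
    intro i
    have := Real.exp_le_one_iff.mp (hterm i)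
    have : 0 ≤ w i * h i x := by linarith
    exact nonneg_of_mul_nonneg_left (by linarith [mul_comm (w i) (h i x)]) (hw i)
  calc ∑ i, Real.exp (-(w' i * h i x))
      ≤ ∑ i, Real.exp (-(w i * h i x)) := by
        apply Finset.sum_le_sum
        intro i _
        apply Real.exp_le_exp.mpr
        have : w i * h i x ≤ w' i * h i x :=
          mul_le_mul_of_nonneg_right (hww' i) (hh i)
        linarith
    _ ≤ 1 := hsum
end

section
/- Let c ≥ 1, let h̄ᵢ : ℝ → ℝ (i ∈ Fin c) be differentiable functions (the constraint functions evaluated along the closed-loop trajectory, h̄ᵢ(t) = hᵢ(t, x(t))), and let w : ℝ → ℝᶜ be differentiable with wᵢ(t) > 0 for all t ≥ 0 and all i. Define H(t) = 1 - ∑_{i=1}^{c} exp(-wᵢ(t) h̄ᵢ(t)). Let α : ℝ → ℝ be locally Lipschitz, strictly increasing, with α(0) = 0. If H(0) ≥ 0 and H'(t) ≥ -α(H(t)) for all t ≥ 0, then h̄ᵢ(t) ≥ 0 for every i and every t ≥ 0. -/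
open scoped BigOperators

/-- Theorem 3 (complete constraint satisfaction): if along the closed-loop
trajectory the consolidated CBF `H t = 1 - ∑ i, exp (-(wᵢ(t) h̄ᵢ(t)))`
(with differentiable data and positive weights) satisfies `H 0 ≥ 0` and the
C-CBF condition `H' t ≥ -α (H t)` for all `t ≥ 0`, where `α` is locally
Lipschitz, strictly increasing and `α 0 = 0`, then every constraint is
satisfied for all time: `h̄ᵢ(t) ≥ 0` for all `i` and all `t ≥ 0`. -/
theorem ccbf_complete_constraint_satisfaction (c : ℕ) (hc : 1 ≤ c)
    (hbar : Fin c → ℝ → ℝ) (hbar_diff : ∀ i, Differentiable ℝ (hbar i))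
    (w : ℝ → Fin c → ℝ) (hw_diff : Differentiable ℝ w)
    (hw_pos : ∀ t ≥ (0 : ℝ), ∀ i, 0 < w t i)
    (H : ℝ → ℝ)
    (hH : ∀ t, H t = 1 - ∑ i, Real.exp (-(w t i * hbar i t)))
    (α : ℝ → ℝ)
    (hα_lip : LocallyLipschitz α)
    (hα_mono : StrictMono α)
    (hα_zero : α 0 = 0)
    (h_init : 0 ≤ H 0)
    (h_cond : ∀ t ≥ (0 : ℝ), deriv H t ≥ -α (H t)) :
    ∀ i, ∀ t ≥ (0 : ℝ), 0 ≤ hbar i t := by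
  have Heq : H = fun t => 1 - ∑ i, Real.exp (-(w t i * hbar i t)) := funext hH
  have HD : Differentiable ℝ H := by
    rw [Heq]
    apply Differentiable.const_sub
    apply Differentiable.fun_sum
    intro i _
    exact (((differentiable_pi.mp hw_diff i).mul (hbar_diff i)).neg).exp
  -- Step 1: H t ≥ 0 for all t ≥ 0
  have key : ∀ t ≥ (0 : ℝ), 0 ≤ H t := by
    intro t₁ ht₁
    by_contra hneg
    push_neg at hneg
    have ht₁0 : 0 < t₁ := by
      rcases lt_or_eq_of_le ht₁ with h | h
      · exact h
      · exact absurd h_init (by rw [← h] at hneg; linarith)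
    set S : Set ℝ := {t | t ∈ Set.Icc 0 t₁ ∧ 0 ≤ H t} with hS
    have hSclosed : IsClosed S := by
      apply IsClosed.inter isClosed_Icc
      exact isClosed_le continuous_const HD.continuous
    have hScomp : IsCompact S := (isCompact_Icc (a := (0:ℝ)) (b := t₁)).of_isClosed_subset
      hSclosed (fun x hx => hx.1)
    have hSne : S.Nonempty := ⟨0, ⟨le_refl 0, le_of_lt ht₁0⟩, h_init⟩
    have hSbdd : BddAbove S := hScomp.bddAbove
    set t₀ := sSup S with ht₀def
    have ht₀S : t₀ ∈ S := hScomp.sSup_mem hSne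
    have ht₀nonneg : 0 ≤ t₀ := ht₀S.1.1
    have ht₀le : t₀ ≤ t₁ := ht₀S.1.2
    have hHt₀ : 0 ≤ H t₀ := ht₀S.2
    have ht₀lt : t₀ < t₁ := by
      rcases lt_or_eq_of_le ht₀le with h | h
      · exact h
      · rw [h] at hHt₀; linarith
    have hHin : ∀ s ∈ Set.Ioc t₀ t₁, H s < 0 := by
      intro s hs
      by_contra hge
      push_neg at hge
      have : s ∈ S := ⟨⟨le_trans ht₀nonneg (le_of_lt hs.1), hs.2⟩, hge⟩
      exact absurd (le_csSup hSbdd this) (not_le.mpr hs.1)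
    obtain ⟨s, hs, hds⟩ := exists_deriv_eq_slope H ht₀lt HD.continuous.continuousOn
      (HD.differentiableOn)
    have hHs : H s < 0 := hHin s ⟨hs.1, le_of_lt hs.2⟩
    have hαneg : α (H s) < 0 := by
      have := hα_mono hHs
      rwa [hα_zero] at this
    have hs0 : (0:ℝ) ≤ s := le_trans ht₀nonneg (le_of_lt hs.1)
    have hpos : 0 < deriv H s := lt_of_lt_of_le (by linarith) (h_cond s hs0)
    rw [hds] at hpos
    have hnum : H t₁ - H t₀ < 0 := by linarith
    have hden : 0 < t₁ - t₀ := by linarith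
    have := div_neg_of_neg_of_pos hnum hden
    linarith
  -- Step 2: conclude
  intro i t ht
  have hHt := key t ht
  rw [hH t] at hHt
  have hsum : ∑ j, Real.exp (-(w t j * hbar j t)) ≤ 1 := by linarith
  have hle : Real.exp (-(w t i * hbar i t)) ≤ ∑ j, Real.exp (-(w t j * hbar j t)) :=
    Finset.single_le_sum (f := fun j => Real.exp (-(w t j * hbar j t)))
      (fun j _ => (Real.exp_pos _).le) (Finset.mem_univ i)
  have : Real.exp (-(w t i * hbar i t)) ≤ 1 := le_trans hle hsum
  have hexp : -(w t i * hbar i t) ≤ 0 := Real.exp_le_one_iff.mp this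
  have hwpos := hw_pos t ht i
  nlinarith
end

section
/- Let p = (√17 - 1)/2 and k = (ln 2)/p². Then for every real x with p < x ≤ 2 and every u ∈ [-1, 1], it holds that x·(e^{k x²} - 1) + (4 - x²)·u > 0. -/
/-- The infinite potential well of the 1-D example: for the system
`ẋ = x (e^{k x²} - 1) + (4 - x²) u` with `|u| ≤ 1`, `p = (√17 - 1)/2`
(the positive root of `p² + p = 4`) and `k = ln 2 / p²`, once `p < x ≤ 2`
the derivative is strictly positive for every admissible control, so the
constraint `x ≤ 2` is doomed to be violated. -/
theorem one_dim_potential_well :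
    ∀ x : ℝ, (Real.sqrt 17 - 1) / 2 < x → x ≤ 2 →
      ∀ u ∈ Set.Icc (-1 : ℝ) 1,
        0 < x * (Real.exp ((Real.log 2 / ((Real.sqrt 17 - 1) / 2) ^ 2) * x ^ 2) - 1)
            + (4 - x ^ 2) * u := by
  intro x hpx hx2 u hu
  obtain ⟨hu1, hu2⟩ := hu
  set p : ℝ := (Real.sqrt 17 - 1) / 2 with hp
  have hs : Real.sqrt 17 ^ 2 = 17 := Real.sq_sqrt (by norm_num)
  have hs4 : Real.sqrt 17 > 4 := by
    nlinarith [Real.sqrt_nonneg 17]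
  have hppos : 0 < p := by rw [hp]; linarith
  have hpeq : p ^ 2 + p = 4 := by rw [hp]; nlinarith
  have hxpos : 0 < x := lt_trans hppos hpx
  have hp2pos : 0 < p ^ 2 := by positivity
  have hkpos : 0 < Real.log 2 / p ^ 2 := by
    apply div_pos (Real.log_pos (by norm_num)) hp2pos
  have hxx : p ^ 2 < x ^ 2 := by nlinarith
  have hk : Real.log 2 / p ^ 2 * p ^ 2 = Real.log 2 := by
    field_simp
  have hexp : 2 < Real.exp (Real.log 2 / p ^ 2 * x ^ 2) := by
    calc (2 : ℝ) = Real.exp (Real.log 2 / p ^ 2 * p ^ 2) := by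
          rw [hk, Real.exp_log]; norm_num
      _ < Real.exp (Real.log 2 / p ^ 2 * x ^ 2) := by
          apply Real.exp_lt_exp.mpr
          exact mul_lt_mul_of_pos_left hxx hkpos
  have h4 : 0 ≤ 4 - x ^ 2 := by nlinarith
  nlinarith [mul_nonneg h4 (by linarith : (0:ℝ) ≤ u + 1),
    mul_pos hxpos (by linarith : (0:ℝ) < Real.exp (Real.log 2 / p ^ 2 * x ^ 2) - 2)]
end
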